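/- Let p : (0,∞)×ℝ → ℝ be measurable and satisfy p_*·1_{{s>s_*}} ≤ p(s,u) ≤ p_∞ for constants p_*, p_∞, s_* > 0, and assume that for a.e. s the map u ↦ p(s,u) is differentiable with |∂p/∂u(s,u)| ≤ K uniformly in (s,u). Then the function F(u) := (∫₀^∞ exp(−∫₀^s p(τ,u) dτ) ds)^{-1} is Lipschitz continuous on ℝ with Lipschitz constant p_∞²·K·(s_*²/2 + s_*/p_* + 1/p_*²), i.e. |F(u₁) − F(u₂)| ≤ p_∞²·K·(s_*²/2 + s_*/p_* + 1/p_*²)·|u₁ − u₂| for all u₁, u₂ ∈ ℝ. -/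

import Mathlib

open MeasureTheory Set Real Filter
open scoped Topology

lemma exp_neg_lip {a b m : ℝ} (ha : m ≤ a) (hb : m ≤ b) :
    |Real.exp (-a) - Real.exp (-b)| ≤ Real.exp (-m) * |a - b| := by
  wlog hab : b ≤ a generalizing a b
  · rw [abs_sub_comm, abs_sub_comm a b]
    exact this hb ha (le_of_not_ge hab)
  have h1 : Real.exp (-a) = Real.exp (-b) * Real.exp (b - a) := by
    rw [← Real.exp_add]; ring_nf
  have h2 := Real.add_one_le_exp (b - a)
  have h3 : Real.exp (-b) ≤ Real.exp (-m) := Real.exp_le_exp.2 (by linarith)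
  have h4 : Real.exp (-a) ≤ Real.exp (-b) := Real.exp_le_exp.2 (by linarith)
  rw [abs_of_nonpos (by linarith), abs_of_nonneg (by linarith)]
  nlinarith [Real.exp_pos (-b)]

/-- `F(u)` is the reciprocal of the mean survival time of the renewal process with
age-dependent firing rate `s ↦ p(s,u)`. -/
noncomputable def Ffun (p : ℝ → ℝ → ℝ) (u : ℝ) : ℝ :=
  (∫ s in Set.Ioi (0:ℝ), Real.exp (-(∫ τ in (0:ℝ)..s, p τ u)))⁻¹

/-- Lipschitz continuity of `F` with the explicit constant
`p_∞² K (s_*²/2 + s_*/p_* + 1/p_*²)`, where `K` bounds `|∂p/∂u|`. -/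
theorem statement5
    (p : ℝ → ℝ → ℝ) (pstar pinf sstar K : ℝ)
    (hpstar : 0 < pstar) (hpinf : 0 < pinf) (hsstar : 0 < sstar) (hK : 0 ≤ K)
    (hp_meas : Measurable fun q : ℝ × ℝ => p q.1 q.2)
    (hp_nonneg : ∀ s u : ℝ, 0 ≤ p s u)
    (hp_lower : ∀ s u : ℝ, sstar < s → pstar ≤ p s u)
    (hp_upper : ∀ s u : ℝ, p s u ≤ pinf)
    (hp_deriv : ∀ᵐ s ∂(volume.restrict (Ioi (0:ℝ))), ∀ u : ℝ,
      ∃ dd : ℝ, HasDerivAt (fun v => p s v) dd u ∧ |dd| ≤ K) :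
    ∀ u₁ u₂ : ℝ,
      |Ffun p u₁ - Ffun p u₂| ≤
        pinf ^ 2 * K * (sstar ^ 2 / 2 + sstar / pstar + 1 / pstar ^ 2) * |u₁ - u₂| := by
  -- basic measurability and integrability
  have hmeas_u : ∀ u : ℝ, Measurable (fun s => p s u) := fun u =>
    hp_meas.comp (measurable_id.prodMk measurable_const)
  have hInt : ∀ (u a b : ℝ), IntervalIntegrable (fun τ => p τ u) volume a b := by
    intro u a b
    rw [intervalIntegrable_iff]
    apply Measure.integrableOn_of_bounded (M := pinf) measure_Ioc_lt_top.ne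
      (hmeas_u u).aestronglyMeasurable
    exact ae_of_all _ fun τ => by
      rw [Real.norm_eq_abs, abs_of_nonneg (hp_nonneg _ _)]; exact hp_upper _ _
  -- bounds on the cumulative hazard I u s = ∫₀ˢ p
  have hI_nonneg : ∀ (u s : ℝ), 0 ≤ s → 0 ≤ ∫ τ in (0:ℝ)..s, p τ u := fun u s hs =>
    intervalIntegral.integral_nonneg hs fun τ _ => hp_nonneg τ u
  have hI_upper : ∀ (u s : ℝ), 0 ≤ s → (∫ τ in (0:ℝ)..s, p τ u) ≤ pinf * s := by
    intro u s hs
    have h := intervalIntegral.integral_mono_on hs (hInt u 0 s)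
      (intervalIntegrable_const (c := pinf)) (fun τ _ => hp_upper τ u)
    simpa [mul_comm] using h
  have hI_lower : ∀ (u s : ℝ), 0 ≤ s → pstar * (s - sstar) ≤ ∫ τ in (0:ℝ)..s, p τ u := by
    intro u s hs
    rcases le_or_gt s sstar with h | h
    · nlinarith [hI_nonneg u s hs]
    · have hsplit : (∫ τ in (0:ℝ)..s, p τ u)
          = (∫ τ in (0:ℝ)..sstar, p τ u) + ∫ τ in sstar..s, p τ u :=
        (intervalIntegral.integral_add_adjacent_intervals (hInt u 0 sstar) (hInt u sstar s)).symm
      have h1 : 0 ≤ ∫ τ in (0:ℝ)..sstar, p τ u := hI_nonneg u sstar hsstar.le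
      have h2 : pstar * (s - sstar) ≤ ∫ τ in sstar..s, p τ u := by
        rw [intervalIntegral.integral_of_le h.le]
        have hc : (∫ _ in Ioc sstar s, (pstar : ℝ)) = pstar * (s - sstar) := by
          simp [Real.volume_Ioc, ENNReal.toReal_ofReal (by linarith : (0:ℝ) ≤ s - sstar),
            mul_comm, h.le]
        rw [← hc]
        exact setIntegral_mono_on (integrableOn_const measure_Ioc_lt_top.ne)
          ((intervalIntegrable_iff_integrableOn_Ioc_of_le h.le).1 (hInt u sstar s))
          measurableSet_Ioc (fun τ hτ => hp_lower τ u hτ.1)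
      linarith
  -- a.e. Lipschitz continuity of p in u
  have hlip : ∀ᵐ τ ∂(volume.restrict (Ioi (0:ℝ))), ∀ v w : ℝ, |p τ v - p τ w| ≤ K * |v - w| := by
    filter_upwards [hp_deriv] with τ hτ v w
    choose dd hdd hbd using hτ
    have h := Convex.norm_image_sub_le_of_norm_hasDerivWithin_le (s := (univ : Set ℝ))
      (f' := dd) (fun x _ => (hdd x).hasDerivWithinAt)
      (fun x _ => by simpa [Real.norm_eq_abs] using hbd x) convex_univ (mem_univ w) (mem_univ v)
    simpa [Real.norm_eq_abs] using h
  -- Lipschitz continuity of I in u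
  have hIlip : ∀ (v w s : ℝ), 0 ≤ s →
      |(∫ τ in (0:ℝ)..s, p τ v) - ∫ τ in (0:ℝ)..s, p τ w| ≤ K * |v - w| * s := by
    intro v w s hs
    rw [← intervalIntegral.integral_sub (hInt v 0 s) (hInt w 0 s),
      intervalIntegral.integral_of_le hs]
    have hb : ∀ᵐ τ ∂(volume.restrict (Ioc (0:ℝ) s)), |p τ v - p τ w| ≤ K * |v - w| := by
      filter_upwards [ae_restrict_of_ae_restrict_of_subset Ioc_subset_Ioi_self hlip]
        with τ hτ using hτ v w
    have hint1 : IntegrableOn (fun τ => p τ v - p τ w) (Ioc (0:ℝ) s) :=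
      (intervalIntegrable_iff_integrableOn_Ioc_of_le hs).1 ((hInt v 0 s).sub (hInt w 0 s))
    calc |∫ τ in Ioc (0:ℝ) s, (p τ v - p τ w)| ≤ ∫ τ in Ioc (0:ℝ) s, |p τ v - p τ w| := by
          simpa [Real.norm_eq_abs] using
            norm_integral_le_integral_norm (μ := volume.restrict (Ioc (0:ℝ) s))
              (fun τ => p τ v - p τ w)
      _ ≤ ∫ _ in Ioc (0:ℝ) s, K * |v - w| :=
          integral_mono_ae hint1.abs (integrableOn_const measure_Ioc_lt_top.ne) hb
      _ = K * |v - w| * s := by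
          simp [Real.volume_Ioc, ENNReal.toReal_ofReal hs, mul_comm, max_eq_left hs]
  -- continuity of the primitive, integrability of the survival function
  have hIcont : ∀ u : ℝ, Continuous (fun s => ∫ τ in (0:ℝ)..s, p τ u) := fun u =>
    intervalIntegral.continuous_primitive (fun a b => hInt u a b) 0
  have hTint : ∀ u : ℝ,
      IntegrableOn (fun s => Real.exp (-(∫ τ in (0:ℝ)..s, p τ u))) (Ioi (0:ℝ)) := by
    intro u
    have hg : IntegrableOn (fun s => Real.exp (pstar * sstar) * Real.exp (-pstar * s))
        (Ioi (0:ℝ)) := (exp_neg_integrableOn_Ioi 0 hpstar).const_mul _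
    refine hg.integrable.mono ?_ ?_
    · exact (((hIcont u).neg).rexp).aestronglyMeasurable.restrict
    · filter_upwards [ae_restrict_mem measurableSet_Ioi] with s hs
      have h1 := hI_lower u s (le_of_lt hs)
      rw [Real.norm_eq_abs, Real.norm_eq_abs, abs_of_pos (Real.exp_pos _),
        abs_of_pos (by positivity), ← Real.exp_add]
      exact Real.exp_le_exp.2 (by nlinarith)
  -- lower bound for T u
  have hTlb : ∀ u : ℝ, 1 / pinf ≤ ∫ s in Ioi (0:ℝ), Real.exp (-(∫ τ in (0:ℝ)..s, p τ u)) := by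
    intro u
    have hderiv : ∀ x ∈ Ici (0:ℝ),
        HasDerivAt (fun s => -Real.exp (-pinf * s) / pinf) (Real.exp (-pinf * x)) x := by
      intro x _
      have h0 : HasDerivAt (fun s : ℝ => -pinf * s) (-pinf) x := by
        simpa using (hasDerivAt_id x).const_mul (-pinf)
      have h2 := (h0.exp).neg.div_const pinf
      refine h2.congr_deriv ?_
      field_simp
    have htend : Tendsto (fun s => -Real.exp (-pinf * s) / pinf) atTop (𝓝 0) := by
      have h0 : Tendsto (fun s : ℝ => -pinf * s) atTop atBot :=
        tendsto_id.const_mul_atTop_of_neg (by linarith)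
      have h1 := (Real.tendsto_exp_atBot.comp h0).neg.div_const pinf
      simpa using h1
    have hval := integral_Ioi_of_hasDerivAt_of_nonneg' hderiv
      (fun x _ => (Real.exp_pos _).le) htend
    have hval' : (∫ s in Ioi (0:ℝ), Real.exp (-pinf * s)) = 1 / pinf := by
      rw [hval]; field_simp; simp
    rw [← hval']
    refine setIntegral_mono_on (exp_neg_integrableOn_Ioi 0 hpinf) (hTint u)
      measurableSet_Ioi (fun s hs => ?_)
    exact Real.exp_le_exp.2 (by have := hI_upper u s (le_of_lt hs); linarith)
  -- the dominating weight D and its integral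
  set D : ℝ → ℝ := fun s => s * Real.exp (-(pstar * max (s - sstar) 0)) with hD
  have hg2_deriv : ∀ x ∈ Ici sstar,
      HasDerivAt (fun s => -((s / pstar + 1 / pstar ^ 2) * Real.exp (-(pstar * (s - sstar)))))
        (x * Real.exp (-(pstar * (x - sstar)))) x := by
    intro x _
    have hE : HasDerivAt (fun s => Real.exp (-(pstar * (s - sstar))))
        (-pstar * Real.exp (-(pstar * (x - sstar)))) x := by
      have h1 : HasDerivAt (fun s : ℝ => -(pstar * (s - sstar))) (-pstar) x := by
        simpa using (((hasDerivAt_id x).sub_const sstar).const_mul pstar).fun_neg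
      simpa [mul_comm] using h1.exp
    have h2 : HasDerivAt (fun s : ℝ => s / pstar + 1 / pstar ^ 2) (1 / pstar) x :=
      ((hasDerivAt_id x).div_const pstar).add_const _
    have h3 := (h2.mul hE).neg
    refine h3.congr_deriv ?_
    field_simp
    ring
  have hexp0 : Tendsto (fun s : ℝ => Real.exp (-(pstar * s))) atTop (𝓝 0) := by
    apply Real.tendsto_exp_atBot.comp
    have := tendsto_id.const_mul_atTop_of_neg (neg_neg_iff_pos.2 hpstar)
    simpa [neg_mul] using this
  have hxe0 : Tendsto (fun s : ℝ => s * Real.exp (-(pstar * s))) atTop (𝓝 0) := by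
    have h0 := Real.tendsto_pow_mul_exp_neg_atTop_nhds_zero 1
    have hmul : Tendsto (fun s : ℝ => pstar * s) atTop atTop :=
      tendsto_id.const_mul_atTop hpstar
    have h1 := (h0.comp hmul).div_const pstar
    simp only [Function.comp, zero_div] at h1
    have h2 : ∀ s : ℝ, (pstar * s) ^ 1 * Real.exp (-(pstar * s)) / pstar
        = s * Real.exp (-(pstar * s)) := by
      intro s; field_simp
    exact h1.congr h2
  have hg2_tend : Tendsto
      (fun s => -((s / pstar + 1 / pstar ^ 2) * Real.exp (-(pstar * (s - sstar)))))
      atTop (𝓝 0) := by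
    have h1 := (((hxe0.const_mul (1 / pstar)).add (hexp0.const_mul (1 / pstar ^ 2))).const_mul
      (-(Real.exp (pstar * sstar))))
    simp only [mul_zero, add_zero, mul_add, zero_add] at h1
    apply h1.congr
    intro s
    rw [show Real.exp (-(pstar * (s - sstar)))
        = Real.exp (pstar * sstar) * Real.exp (-(pstar * s)) by rw [← Real.exp_add]; ring_nf]
    ring
  have hg2pos : ∀ x ∈ Ioi sstar, 0 ≤ x * Real.exp (-(pstar * (x - sstar))) := fun x hx =>
    mul_nonneg (le_of_lt (lt_trans hsstar hx)) (Real.exp_pos _).le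
  have hInt2 : IntegrableOn (fun s => s * Real.exp (-(pstar * (s - sstar)))) (Ioi sstar) :=
    integrableOn_Ioi_deriv_of_nonneg' hg2_deriv hg2pos hg2_tend
  have hVal2 : (∫ s in Ioi sstar, s * Real.exp (-(pstar * (s - sstar))))
      = sstar / pstar + 1 / pstar ^ 2 := by
    rw [integral_Ioi_of_hasDerivAt_of_nonneg' hg2_deriv hg2pos hg2_tend]
    simp
  have hD1eq : ∀ s ∈ Ioc (0:ℝ) sstar, D s = s := by
    intro s hs
    have h : s - sstar ≤ 0 := by linarith [hs.2]
    simp [hD, max_eq_right h]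
  have hD2eq : ∀ s ∈ Ioi sstar, D s = s * Real.exp (-(pstar * (s - sstar))) := by
    intro s hs
    have h : (0:ℝ) ≤ s - sstar := by linarith [mem_Ioi.1 hs]
    simp [hD, max_eq_left h]
  have hD1int : IntegrableOn D (Ioc (0:ℝ) sstar) := by
    apply (continuous_id.integrableOn_Ioc (a := (0:ℝ)) (b := sstar)).congr_fun
      (fun s hs => (hD1eq s hs).symm) measurableSet_Ioc
  have hD2int : IntegrableOn D (Ioi sstar) :=
    hInt2.congr_fun (fun s hs => (hD2eq s hs).symm) measurableSet_Ioi
  have hD1val : (∫ s in Ioc (0:ℝ) sstar, D s) = sstar ^ 2 / 2 := by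
    rw [setIntegral_congr_fun measurableSet_Ioc hD1eq,
      ← intervalIntegral.integral_of_le hsstar.le]
    simpa using integral_id (a := (0:ℝ)) (b := sstar)
  have hD_int : IntegrableOn D (Ioi (0:ℝ)) := by
    rw [← Ioc_union_Ioi_eq_Ioi hsstar.le]
    exact hD1int.union hD2int
  have hD_val : (∫ s in Ioi (0:ℝ), D s) = sstar ^ 2 / 2 + sstar / pstar + 1 / pstar ^ 2 := by
    rw [← Ioc_union_Ioi_eq_Ioi hsstar.le,
      setIntegral_union (Ioc_disjoint_Ioi le_rfl) measurableSet_Ioi hD1int hD2int,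
      hD1val, setIntegral_congr_fun measurableSet_Ioi hD2eq, hVal2]
    ring
  -- main difference bound
  intro u₁ u₂
  set T₁ := ∫ s in Ioi (0:ℝ), Real.exp (-(∫ τ in (0:ℝ)..s, p τ u₁)) with hT1
  set T₂ := ∫ s in Ioi (0:ℝ), Real.exp (-(∫ τ in (0:ℝ)..s, p τ u₂)) with hT2
  have hC : (0:ℝ) ≤ sstar ^ 2 / 2 + sstar / pstar + 1 / pstar ^ 2 := by positivity
  have hdiff : |T₁ - T₂| ≤ K * |u₁ - u₂| * (sstar ^ 2 / 2 + sstar / pstar + 1 / pstar ^ 2) := by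
    rw [hT1, hT2, ← integral_sub (hTint u₁) (hTint u₂)]
    have hptw : ∀ s ∈ Ioi (0:ℝ),
        |Real.exp (-(∫ τ in (0:ℝ)..s, p τ u₁)) - Real.exp (-(∫ τ in (0:ℝ)..s, p τ u₂))|
          ≤ K * |u₁ - u₂| * D s := by
      intro s hs
      have hs0 : (0:ℝ) ≤ s := (mem_Ioi.1 hs).le
      have hm1 : pstar * max (s - sstar) 0 ≤ ∫ τ in (0:ℝ)..s, p τ u₁ := by
        rcases le_or_gt s sstar with h | h
        · rw [max_eq_right (by linarith : s - sstar ≤ 0)]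
          simpa using hI_nonneg u₁ s hs0
        · rw [max_eq_left (by linarith : (0:ℝ) ≤ s - sstar)]
          exact hI_lower u₁ s hs0
      have hm2 : pstar * max (s - sstar) 0 ≤ ∫ τ in (0:ℝ)..s, p τ u₂ := by
        rcases le_or_gt s sstar with h | h
        · rw [max_eq_right (by linarith : s - sstar ≤ 0)]
          simpa using hI_nonneg u₂ s hs0
        · rw [max_eq_left (by linarith : (0:ℝ) ≤ s - sstar)]
          exact hI_lower u₂ s hs0
      calc |Real.exp (-(∫ τ in (0:ℝ)..s, p τ u₁)) - Real.exp (-(∫ τ in (0:ℝ)..s, p τ u₂))|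
          ≤ Real.exp (-(pstar * max (s - sstar) 0))
            * |(∫ τ in (0:ℝ)..s, p τ u₁) - ∫ τ in (0:ℝ)..s, p τ u₂| := exp_neg_lip hm1 hm2
        _ ≤ Real.exp (-(pstar * max (s - sstar) 0)) * (K * |u₁ - u₂| * s) := by
            exact mul_le_mul_of_nonneg_left (hIlip u₁ u₂ s hs0) (Real.exp_pos _).le
        _ = K * |u₁ - u₂| * D s := by rw [hD]; ring
    calc |∫ s in Ioi (0:ℝ),
          (Real.exp (-(∫ τ in (0:ℝ)..s, p τ u₁)) - Real.exp (-(∫ τ in (0:ℝ)..s, p τ u₂)))|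
        ≤ ∫ s in Ioi (0:ℝ),
          |Real.exp (-(∫ τ in (0:ℝ)..s, p τ u₁)) - Real.exp (-(∫ τ in (0:ℝ)..s, p τ u₂))| := by
          simpa [Real.norm_eq_abs] using
            norm_integral_le_integral_norm (μ := volume.restrict (Ioi (0:ℝ)))
              (fun s => Real.exp (-(∫ τ in (0:ℝ)..s, p τ u₁))
                - Real.exp (-(∫ τ in (0:ℝ)..s, p τ u₂)))
      _ ≤ ∫ s in Ioi (0:ℝ), K * |u₁ - u₂| * D s :=
          setIntegral_mono_on (((hTint u₁).sub (hTint u₂)).abs)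
            (hD_int.const_mul _) measurableSet_Ioi hptw
      _ = K * |u₁ - u₂| * (sstar ^ 2 / 2 + sstar / pstar + 1 / pstar ^ 2) := by
          rw [integral_const_mul, hD_val]
  -- conclude
  have hT1pos : 0 < T₁ := lt_of_lt_of_le (by positivity) (hTlb u₁)
  have hT2pos : 0 < T₂ := lt_of_lt_of_le (by positivity) (hTlb u₂)
  have hTT : (T₁ * T₂)⁻¹ ≤ pinf ^ 2 := by
    have h12 : 1 / pinf * (1 / pinf) ≤ T₁ * T₂ :=
      mul_le_mul (hTlb u₁) (hTlb u₂) (by positivity) hT1pos.le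
    have heq : 1 / pinf * (1 / pinf) = 1 / pinf ^ 2 := by rw [pow_two, one_div_mul_one_div]
    have h13 : 1 / pinf ^ 2 ≤ T₁ * T₂ := heq ▸ h12
    calc (T₁ * T₂)⁻¹ ≤ (1 / pinf ^ 2)⁻¹ := by
          apply inv_anti₀ (by positivity) h13
      _ = pinf ^ 2 := by simp
  have hFeq : Ffun p u₁ - Ffun p u₂ = (T₂ - T₁) * (T₁ * T₂)⁻¹ := by
    rw [Ffun, Ffun, ← hT1, ← hT2]
    field_simp
  rw [hFeq, abs_mul, abs_of_pos (by positivity : (0:ℝ) < (T₁ * T₂)⁻¹)]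
  have h1 : |T₂ - T₁| ≤ K * |u₁ - u₂| * (sstar ^ 2 / 2 + sstar / pstar + 1 / pstar ^ 2) := by
    rw [abs_sub_comm]; exact hdiff
  calc |T₂ - T₁| * (T₁ * T₂)⁻¹
      ≤ (K * |u₁ - u₂| * (sstar ^ 2 / 2 + sstar / pstar + 1 / pstar ^ 2)) * pinf ^ 2 :=
        mul_le_mul h1 hTT (by positivity) (by positivity)
    _ = pinf ^ 2 * K * (sstar ^ 2 / 2 + sstar / pstar + 1 / pstar ^ 2) * |u₁ - u₂| := by ring
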